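/- For every integer n ≥ 2, every integer m with 1 ≤ m ≤ n, and every real number x ≥ 1, one has Pₙ(x) > ∑_{ℓ=1}^{m} (1/ℓ!) · C(n+ℓ−1, 2ℓ−1) · x^ℓ, where C(·,·) denotes the binomial coefficient. -/

import Mathlib

/-- `σ₂(n) = ∑_{d ∣ n} d²`, the sum of the squares of the divisors of `n`. -/
def sigma2 (n : ℕ) : ℕ := ∑ d ∈ n.divisors, d ^ 2

/-- The polynomials `Pₙ`, defined by `P 0 = 1` and
`Pₙ(x) = (x/n) ∑_{k=1}^{n} σ₂(k) · P_{n−k}(x)` for `n ≥ 1`.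
They satisfy `Pₙ(1) = pp(n)`, the number of plane partitions of `n`. -/
noncomputable def P : ℕ → Polynomial ℝ
  | 0 => 1
  | n + 1 => Polynomial.C (((n : ℝ) + 1)⁻¹) * Polynomial.X *
      ∑ k ∈ Finset.range (n + 1), Polynomial.C ((sigma2 (k + 1) : ℝ)) * P (n - k)

open Finset Polynomial

lemma sq_eq_choose (k : ℕ) : k ^ 2 = k.choose 1 + 2 * k.choose 2 := by
  induction k with
  | zero => simp
  | succ k ih =>
    have h1 : (k+1).choose 2 = k + k.choose 2 := by
      rw [Nat.choose_succ_succ k 1, Nat.choose_one_right]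
    have h2 : (k+1)^2 = k^2 + 2*k + 1 := by ring
    rw [h2, ih, h1]
    simp only [Nat.choose_one_right]
    ring

lemma hockey (N b : ℕ) : ∑ k ∈ range (N+1), k.choose b = (N+1).choose (b+1) := by
  rw [← Nat.sum_Icc_choose N b]
  symm
  apply Finset.sum_subset
  · intro k hk
    simp only [mem_Icc] at hk
    simp only [mem_range]
    omega
  · intro k hk hk2
    simp only [mem_range] at hk
    simp only [mem_Icc, not_and_or, not_le] at hk2
    rcases hk2 with h | h
    · exact Nat.choose_eq_zero_of_lt h
    · omega

lemma vand (a : ℕ) : ∀ N b : ℕ, ∑ k ∈ range (N+1), (k.choose a) * ((N - k).choose b)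
    = (N+1).choose (a+b+1) := by
  induction a with
  | zero =>
    intro N b
    simp only [Nat.choose_zero_right, one_mul, Nat.zero_add]
    have h := Finset.sum_range_reflect (fun k => k.choose b) (N+1)
    simp only [Nat.add_sub_cancel] at h
    rw [h, hockey]
  | succ a ih =>
    intro N b
    induction N with
    | zero =>
      simp [Nat.choose_eq_zero_of_lt (show 1 < a+1+b+1 by omega)]
    | succ N ihN =>
      rw [Finset.sum_range_succ']
      simp only [Nat.succ_sub_succ]
      have : ∀ k, (k+1).choose (a+1) * ((N - k).choose b)
          = k.choose a * ((N-k).choose b) + k.choose (a+1) * ((N-k).choose b) := by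
        intro k; rw [Nat.choose_succ_succ, add_mul]
      simp only [this, Finset.sum_add_distrib, ih N b, ihN]
      rw [Nat.choose_zero_succ, zero_mul, add_zero]
      rw [show a+1+b+1 = (a+b+1)+1 from by ring, ← Nat.choose_succ_succ']

lemma key (n j : ℕ) :
    (j+2) * ∑ k ∈ range (n+1), (k+1)^2 * ((n - k + j).choose (2*j+1))
      = (n+1) * ((n+j+2).choose (2*j+3)) := by
  have step1 : ∑ k ∈ range (n+1), (k+1)^2 * ((n - k + j).choose (2*j+1))
      = ∑ k ∈ range (n+j+1+1), k^2 * ((n+j+1 - k).choose (2*j+1)) := by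
    rw [Finset.sum_range_succ' (fun k => k^2 * ((n+j+1 - k).choose (2*j+1))) (n+j+1)]
    norm_num
    rw [← Finset.sum_subset (Finset.range_subset_range.mpr (show n+1 ≤ n+j+1 by omega))]
    · apply Finset.sum_congr rfl
      intro k hk
      simp only [mem_range] at hk
      congr 2
      omega
    · intro k hk hk2
      simp only [mem_range] at hk hk2
      have h0 : (n+j+1-(k+1)).choose (2*j+1) = 0 :=
        Nat.choose_eq_zero_of_lt (by omega)
      simp only [Nat.succ_sub_succ] at h0 ⊢
      simp [h0]
  have step2 : ∑ k ∈ range (n+j+1+1), k^2 * ((n+j+1 - k).choose (2*j+1))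
      = (n+j+2).choose (2*j+3) + 2 * ((n+j+2).choose (2*j+4)) := by
    have expand : ∀ k, k^2 * ((n+j+1 - k).choose (2*j+1))
        = k.choose 1 * ((n+j+1 - k).choose (2*j+1))
          + 2 * (k.choose 2 * ((n+j+1 - k).choose (2*j+1))) := by
      intro k
      rw [sq_eq_choose k]
      ring
    simp only [expand]
    rw [Finset.sum_add_distrib, ← Finset.mul_sum, vand 1 (n+j+1) (2*j+1),
      vand 2 (n+j+1) (2*j+1)]
    rw [show n+j+1+1 = n+j+2 from by omega, show 1+(2*j+1)+1 = 2*j+3 from by omega,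
      show 2+(2*j+1)+1 = 2*j+4 from by omega]
  rw [step1, step2]
  rcases le_or_gt (j+1) n with hc | hc
  · obtain ⟨t, rfl⟩ : ∃ t, n = j+1+t := ⟨n-(j+1), by omega⟩
    have h := Nat.choose_succ_right_eq (j+1+t+j+2) (2*j+3)
    have e1 : 2*j+3+1 = 2*j+4 := by omega
    have e2 : j+1+t+j+2 - (2*j+3) = t := by omega
    rw [e1, e2] at h
    have h2 : 2*((j+2)*((j+1+t+j+2).choose (2*j+4)))
        = (j+1+t+j+2).choose (2*j+3) * t := by
      rw [← h]; ring
    calc (j+2) * ((j+1+t+j+2).choose (2*j+3) + 2 * ((j+1+t+j+2).choose (2*j+4)))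
        = (j+2) * ((j+1+t+j+2).choose (2*j+3))
          + 2*((j+2)*((j+1+t+j+2).choose (2*j+4))) := by ring
      _ = (j+2) * ((j+1+t+j+2).choose (2*j+3))
          + (j+1+t+j+2).choose (2*j+3) * t := by rw [h2]
      _ = (j+1+t+1) * ((j+1+t+j+2).choose (2*j+3)) := by ring
  · have c1 : (n+j+2).choose (2*j+3) = 0 := Nat.choose_eq_zero_of_lt (by omega)
    have c2 : (n+j+2).choose (2*j+4) = 0 := Nat.choose_eq_zero_of_lt (by omega)
    rw [c1, c2]
    simp

lemma P_zero : P 0 = 1 := by rw [P]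

lemma P_succ (n : ℕ) : P (n+1) = Polynomial.C (((n : ℝ) + 1)⁻¹) * Polynomial.X *
    ∑ k ∈ Finset.range (n + 1), Polynomial.C ((sigma2 (k + 1) : ℝ)) * P (n - k) := by
  rw [P]

lemma coeff_nonneg : ∀ n i, 0 ≤ (P n).coeff i := by
  intro n
  induction n using Nat.strong_induction_on with
  | _ n ih =>
    match n with
    | 0 =>
      intro i
      rw [P_zero, Polynomial.coeff_one]
      split <;> norm_num
    | n+1 =>
      intro i
      rw [P_succ, mul_assoc, Polynomial.coeff_C_mul]
      apply mul_nonneg (by positivity)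
      cases i with
      | zero =>
        rw [Polynomial.mul_coeff_zero, Polynomial.coeff_X_zero, zero_mul]
      | succ m =>
        rw [Polynomial.coeff_X_mul, Polynomial.finset_sum_coeff]
        apply Finset.sum_nonneg
        intro k hk
        rw [Polynomial.coeff_C_mul]
        exact mul_nonneg (by positivity) (ih (n-k) (by omega) m)

lemma coeff_zero_P (n : ℕ) : (P (n+1)).coeff 0 = 0 := by
  rw [P_succ, mul_assoc, Polynomial.coeff_C_mul, Polynomial.mul_coeff_zero,
    Polynomial.coeff_X_zero, zero_mul, mul_zero]

lemma coeff_rec (n ℓ : ℕ) : (P (n+1)).coeff (ℓ+1)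
    = ((n:ℝ)+1)⁻¹ * ∑ k ∈ range (n+1), (sigma2 (k+1) : ℝ) * (P (n-k)).coeff ℓ := by
  rw [P_succ, mul_assoc, Polynomial.coeff_C_mul, Polynomial.coeff_X_mul,
    Polynomial.finset_sum_coeff]
  simp only [Polynomial.coeff_C_mul]

lemma coeff_one_P (n : ℕ) : (P (n+1)).coeff 1 = ((n:ℝ)+1)⁻¹ * (sigma2 (n+1) : ℝ) := by
  rw [show (1:ℕ) = 0 + 1 from rfl, coeff_rec n 0]
  congr 1
  rw [Finset.sum_eq_single n]
  · simp [P_zero]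
  · intro k hk hkn
    simp only [mem_range] at hk
    obtain ⟨t, ht⟩ : ∃ t, n - k = t + 1 := ⟨n - k - 1, by omega⟩
    rw [ht, coeff_zero_P, mul_zero]
  · intro h
    simp at h

lemma natDegree_P_le : ∀ n, (P n).natDegree ≤ n := by
  intro n
  induction n using Nat.strong_induction_on with
  | _ n ih =>
    match n with
    | 0 => rw [P_zero]; simp
    | n+1 =>
      rw [P_succ]
      calc (Polynomial.C (((n : ℝ) + 1)⁻¹) * Polynomial.X *
          ∑ k ∈ Finset.range (n + 1), Polynomial.C ((sigma2 (k + 1) : ℝ)) * P (n - k)).natDegree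
          ≤ (Polynomial.C (((n : ℝ) + 1)⁻¹) * Polynomial.X).natDegree +
            (∑ k ∈ Finset.range (n + 1),
              Polynomial.C ((sigma2 (k + 1) : ℝ)) * P (n - k)).natDegree :=
            Polynomial.natDegree_mul_le
        _ ≤ 1 + n := by
            apply add_le_add
            · exact (Polynomial.natDegree_C_mul_le _ _).trans (by simp)
            · apply Polynomial.natDegree_sum_le_of_forall_le
              intro k hk
              exact (Polynomial.natDegree_C_mul_le _ _).trans
                ((ih (n-k) (by simp at hk; omega)).trans (by omega))
        _ = n + 1 := by omega

lemma sigma2_ge (n : ℕ) : n^2 ≤ sigma2 n := by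
  unfold sigma2
  rcases Nat.eq_zero_or_pos n with h | h
  · simp [h]
  · exact Finset.single_le_sum (f := fun d => d^2) (fun d _ => Nat.zero_le _)
      (Nat.mem_divisors_self n (by omega))

lemma sigma2_gt (n : ℕ) (hn : 2 ≤ n) : n^2 + 1 ≤ sigma2 n := by
  unfold sigma2
  have hsub : ({1, n} : Finset ℕ) ⊆ n.divisors := by
    intro d hd
    simp only [mem_insert, mem_singleton] at hd
    rcases hd with rfl | rfl
    · exact Nat.one_mem_divisors.mpr (by omega)
    · exact Nat.mem_divisors_self _ (by omega)
  have hsum : ∑ d ∈ ({1, n} : Finset ℕ), d^2 = 1 + n^2 := by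
    rw [Finset.sum_pair (by omega)]
    norm_num
  calc n^2 + 1 = 1 + n^2 := by omega
    _ = ∑ d ∈ ({1, n} : Finset ℕ), d^2 := hsum.symm
    _ ≤ sigma2 n := Finset.sum_le_sum_of_subset hsub

noncomputable def cc (n ℓ : ℕ) : ℝ :=
  (Nat.choose (n + ℓ - 1) (2*ℓ - 1) : ℝ) / (Nat.factorial ℓ : ℝ)

lemma cc_nonneg (n ℓ : ℕ) : 0 ≤ cc n ℓ := by unfold cc; positivity

lemma cc_one (n : ℕ) : cc (n+1) 1 = (n:ℝ)+1 := by
  unfold cc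
  rw [show n+1+1-1 = n+1 from by omega, show 2*1-1 = 1 from by omega,
    Nat.choose_one_right, Nat.factorial_one]
  push_cast
  ring

lemma coeff_ge : ∀ n, ∀ ℓ, 1 ≤ ℓ → cc n ℓ ≤ (P n).coeff ℓ := by
  intro n
  induction n using Nat.strong_induction_on with
  | _ n ih =>
    match n with
    | 0 =>
      intro ℓ hℓ
      have h0 : cc 0 ℓ = 0 := by
        unfold cc
        rw [Nat.choose_eq_zero_of_lt (by omega)]
        simp
      rw [h0]
      exact coeff_nonneg 0 ℓ
    | n+1 =>
      intro ℓ hℓ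
      match ℓ, hℓ with
      | 1, _ =>
        rw [coeff_one_P, cc_one]
        have h1 : (((n+1)^2 : ℕ) : ℝ) ≤ (sigma2 (n+1) : ℝ) := by
          exact_mod_cast sigma2_ge (n+1)
        push_cast at h1
        have hpos : (0:ℝ) < (n:ℝ)+1 := by positivity
        rw [le_inv_mul_iff₀ hpos]
        nlinarith
      | (j+2), _ =>
        rw [show j+2 = (j+1)+1 from rfl, coeff_rec n (j+1)]
        have hstep : ∀ k ∈ range (n+1),
            ((k:ℝ)+1)^2 * cc (n-k) (j+1) ≤ (sigma2 (k+1) : ℝ) * (P (n-k)).coeff (j+1) := by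
          intro k hk
          simp only [mem_range] at hk
          apply mul_le_mul
          · have := sigma2_ge (k+1)
            have h2 : (((k+1)^2 : ℕ) : ℝ) ≤ (sigma2 (k+1) : ℝ) := by exact_mod_cast this
            push_cast at h2
            exact h2
          · exact ih (n-k) (by omega) (j+1) (by omega)
          · exact cc_nonneg _ _
          · positivity
        have hsum := Finset.sum_le_sum hstep
        have heq : ((n:ℝ)+1)⁻¹ * ∑ k ∈ range (n+1), ((k:ℝ)+1)^2 * cc (n-k) (j+1)
            = cc (n+1) (j+2) := by
          have hkeyR : ((j:ℝ)+2) * ∑ k ∈ range (n+1),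
              ((k:ℝ)+1)^2 * ((Nat.choose (n-k+j) (2*j+1) : ℕ) : ℝ)
              = ((n:ℝ)+1) * ((Nat.choose (n+j+2) (2*j+3) : ℕ) : ℝ) := by
            exact_mod_cast key n j
          have hccv : ∀ k, cc (n-k) (j+1)
              = ((Nat.choose (n-k+j) (2*j+1) : ℕ) : ℝ) / ((Nat.factorial (j+1) : ℕ) : ℝ) := by
            intro k
            unfold cc
            rw [show n-k+(j+1)-1 = n-k+j from by omega, show 2*(j+1)-1 = 2*j+1 from by omega]
          simp only [hccv]
          unfold cc
          rw [show n+1+(j+2)-1 = n+j+2 from by omega, show 2*(j+2)-1 = 2*j+3 from by omega,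
            Nat.factorial_succ (j+1)]
          simp only [← mul_div_assoc]
          rw [← Finset.sum_div]
          have hF : ((Nat.factorial (j+1) : ℕ) : ℝ) ≠ 0 := by
            exact_mod_cast (Nat.factorial_ne_zero (j+1))
          have hn1 : ((n:ℝ)+1) ≠ 0 := by positivity
          have hj2 : ((j:ℝ)+2) ≠ 0 := by positivity
          push_cast
          field_simp
          linear_combination hkeyR
        rw [← heq]
        exact mul_le_mul_of_nonneg_left hsum (by positivity)

lemma coeff_one_gt (n : ℕ) (hn : 2 ≤ n) : cc n 1 < (P n).coeff 1 := by
  obtain ⟨m, rfl⟩ : ∃ m, n = m+1 := ⟨n-1, by omega⟩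
  rw [coeff_one_P, cc_one]
  have h1 : (((m+1)^2 + 1 : ℕ) : ℝ) ≤ (sigma2 (m+1) : ℝ) := by
    exact_mod_cast sigma2_gt (m+1) (by omega)
  push_cast at h1
  have hpos : (0:ℝ) < (m:ℝ)+1 := by positivity
  rw [lt_inv_mul_iff₀ hpos]
  nlinarith

/-- For `n ≥ 2`, `1 ≤ m ≤ n`, and real `x ≥ 1`:
`P n` at `x` exceeds `∑_{ℓ=1}^{m} (1/ℓ!) · C(n+ℓ-1, 2ℓ-1) · x ^ ℓ`. -/
theorem P_lower_bound (n m : ℕ) (hn : 2 ≤ n) (hm1 : 1 ≤ m) (hmn : m ≤ n) (x : ℝ) (hx : 1 ≤ x) :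
    (P n).eval x >
      ∑ ℓ ∈ Finset.Icc 1 m,
        (1 / (Nat.factorial ℓ : ℝ)) * (Nat.choose (n + ℓ - 1) (2 * ℓ - 1) : ℝ) * x ^ ℓ := by
  have hdeg : (P n).natDegree < n+1 := Nat.lt_succ_of_le (natDegree_P_le n)
  rw [Polynomial.eval_eq_sum_range' hdeg]
  have hx0 : (0:ℝ) < x := by linarith
  have hterm : ∀ ℓ, (1 / (Nat.factorial ℓ : ℝ)) * (Nat.choose (n + ℓ - 1) (2 * ℓ - 1) : ℝ)
      = cc n ℓ := by
    intro ℓ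
    unfold cc
    ring
  calc ∑ ℓ ∈ Finset.Icc 1 m,
        (1 / (Nat.factorial ℓ : ℝ)) * (Nat.choose (n + ℓ - 1) (2 * ℓ - 1) : ℝ) * x ^ ℓ
      < ∑ ℓ ∈ Finset.Icc 1 m, (P n).coeff ℓ * x ^ ℓ := by
        apply Finset.sum_lt_sum
        · intro i hi
          simp only [Finset.mem_Icc] at hi
          rw [hterm i]
          exact mul_le_mul_of_nonneg_right (coeff_ge n i hi.1) (by positivity)
        · refine ⟨1, by simp only [Finset.mem_Icc]; omega, ?_⟩
          rw [hterm 1]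
          exact mul_lt_mul_of_pos_right (coeff_one_gt n hn) (by positivity)
    _ ≤ ∑ i ∈ Finset.range (n+1), (P n).coeff i * x ^ i := by
        apply Finset.sum_le_sum_of_subset_of_nonneg
        · intro ℓ hℓ
          simp only [Finset.mem_Icc] at hℓ
          simp only [Finset.mem_range]
          omega
        · intro i _ _
          exact mul_nonneg (coeff_nonneg n i) (by positivity)
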